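/- arXiv:2401.02609 — 3 statements merged into one kernel-verified Lean document; each statement's English description precedes it below -/
import Mathlib

section
/- Let a_1,…,a_N and b_1,…,b_N be strictly positive real weights, and let S_1,…,S_N be i.i.d. Exponential(1) random variables. Define U_p = argmin_{1≤i≤N} S_i/a_i and U_q = argmin_{1≤i≤N} S_i/b_i. Then for every k ∈ {1,…,N}, Pr(U_p ≠ U_q | U_p = k) ≤ 1 − (1 + (a_k / Σ_{j=1}^N a_j) · (Σ_{j=1}^N b_j) / b_k)^{-1}. (In particular, writing λ_i^p = a_i/Σ_j a_j and λ_i^q = b_i/Σ_j b_j, the bound reads Pr(U_p ≠ U_q | U_p = k) ≤ 1 − (1 + λ_k^p/λ_k^q)^{-1}.) -/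
open MeasureTheory ProbabilityTheory

open Real Set
open scoped ENNReal

lemma aux_measurable_inf' {ι δ : Type*} [MeasurableSpace δ]
    (s : Finset ι) (hs : s.Nonempty) (f : ι → δ → ℝ) (hf : ∀ i, Measurable (f i)) :
    Measurable fun x => s.inf' hs fun i => f i x := by
  induction hs using Finset.Nonempty.cons_induction with
  | singleton i => simp only [Finset.inf'_singleton]; exact hf i
  | cons i s his hs ih =>
      have heq : (fun x => (Finset.cons i s his).inf' (Finset.cons_nonempty his)
          fun j => f j x) = fun x => (f i x) ⊓ (s.inf' hs fun j => f j x) :=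
        funext fun x => Finset.inf'_cons hs _
      rw [heq]
      exact (hf i).min ih

lemma aux_expMeasure_singleton (c : ℝ) : expMeasure 1 {c} = 0 := by
  rw [expMeasure, gammaMeasure, withDensity_apply _ (measurableSet_singleton c),
    Measure.restrict_eq_zero.mpr (by simp), lintegral_zero_measure]

lemma aux_exp_le_one {c : ℝ} (hc : 0 ≤ c) : Real.exp (-c) ≤ 1 :=
  Real.exp_le_one_iff.mpr (by linarith)

lemma aux_expMeasure_Ioi {c : ℝ} (hc : 0 ≤ c) :
    expMeasure 1 (Ioi c) = ENNReal.ofReal (Real.exp (-c)) := by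
  haveI := isProbabilityMeasure_expMeasure (r := 1) one_pos
  have hIic : expMeasure 1 (Iic c) = ENNReal.ofReal (1 - Real.exp (-c)) := by
    have h := lintegral_exponentialPDF_eq_antiDeriv (r := 1) one_pos c
    rw [if_pos hc, one_mul] at h
    rw [expMeasure, gammaMeasure, withDensity_apply _ measurableSet_Iic]
    exact h
  have hcompl : expMeasure 1 (Ioi c) = 1 - expMeasure 1 (Iic c) := by
    rw [← Set.compl_Iic]
    rw [measure_compl measurableSet_Iic (measure_ne_top _ _)]
    simp
  rw [hcompl, hIic]
  rw [← ENNReal.ofReal_one, ← ENNReal.ofReal_sub _ (by nlinarith [aux_exp_le_one hc])]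
  congr 1
  ring

lemma aux_expMeasure_Ici {c : ℝ} (hc : 0 ≤ c) :
    expMeasure 1 (Ici c) = ENNReal.ofReal (Real.exp (-c)) := by
  have h1 : Ici c = {c} ∪ Ioi c := by
    ext x; simp [le_iff_lt_or_eq, eq_comm, or_comm]
  rw [h1]
  refine le_antisymm ?_ ?_
  · calc expMeasure 1 ({c} ∪ Ioi c) ≤ expMeasure 1 {c} + expMeasure 1 (Ioi c) :=
        measure_union_le _ _
    _ = ENNReal.ofReal (Real.exp (-c)) := by
        rw [aux_expMeasure_singleton, zero_add, aux_expMeasure_Ioi hc]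
  · rw [← aux_expMeasure_Ioi hc]
    exact measure_mono subset_union_right

open scoped ENNReal

/-- Core computation: if `X ~ Exp(1)` is independent of `g`, and `g` has exponential-type
survival function `exp (-(r*x))`, then `P(X < g) = P(X ≤ g) = (1+r)⁻¹`. -/
lemma aux_core {Ω : Type*} [MeasurableSpace Ω] (μ : Measure Ω) [IsProbabilityMeasure μ]
    (X g : Ω → ℝ) (hX : Measurable X) (hg : Measurable g)
    (hlaw : μ.map X = expMeasure 1) (hind : IndepFun X g μ) {r : ℝ} (hr : 0 ≤ r)
    (hsurv₁ : ∀ x : ℝ, 0 ≤ x → μ {ω | x < g ω} = ENNReal.ofReal (Real.exp (-(r * x))))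
    (hsurv₂ : ∀ x : ℝ, 0 ≤ x → μ {ω | x ≤ g ω} = ENNReal.ofReal (Real.exp (-(r * x)))) :
    μ {ω | X ω < g ω} = ENNReal.ofReal (1 + r)⁻¹ ∧
      μ {ω | X ω ≤ g ω} = ENNReal.ofReal (1 + r)⁻¹ := by
  haveI : IsProbabilityMeasure (μ.map g) := Measure.isProbabilityMeasure_map hg.aemeasurable
  haveI := isProbabilityMeasure_expMeasure (r := 1) one_pos
  have hjoint : μ.map (fun ω => (X ω, g ω)) = (μ.map X).prod (μ.map g) :=
    (indepFun_iff_map_prod_eq_prod_map_map hX.aemeasurable hg.aemeasurable).mp hind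
  have hr1 : (0:ℝ) < 1 + r := by linarith
  -- the common integral computation
  have key : ∀ (F : ℝ → ℝ≥0∞), Measurable F → (∀ x, 0 ≤ x → F x = ENNReal.ofReal (Real.exp (-(r * x)))) →
      ∫⁻ x, F x ∂(expMeasure 1) = ENNReal.ofReal (1 + r)⁻¹ := by
    intro F hF hFval
    have hm : Measurable (gammaPDF 1 1) := (measurable_gammaPDFReal 1 1).ennreal_ofReal
    rw [expMeasure, gammaMeasure, lintegral_withDensity_eq_lintegral_mul _ hm hF]
    have hcong : ∀ x, (gammaPDF 1 1 * F) x
        = ENNReal.ofReal (1 + r)⁻¹ * exponentialPDF (1 + r) x := by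
      intro x
      have hgp : gammaPDF 1 1 x = exponentialPDF 1 x := rfl
      simp only [Pi.mul_apply, hgp]
      by_cases hx : 0 ≤ x
      · rw [exponentialPDF_of_nonneg hx, exponentialPDF_of_nonneg hx, hFval x hx,
          ← ENNReal.ofReal_mul (by positivity), ← ENNReal.ofReal_mul (by positivity)]
        congr 1
        rw [one_mul, ← Real.exp_add]
        rw [inv_mul_cancel_left₀ (ne_of_gt hr1)]
        congr 1
        ring
      · rw [exponentialPDF_of_neg (lt_of_not_ge hx), exponentialPDF_of_neg (lt_of_not_ge hx),
          zero_mul, mul_zero]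
    have hm2 : Measurable (exponentialPDF (1 + r)) :=
      (measurable_exponentialPDFReal (1 + r)).ennreal_ofReal
    rw [funext hcong, lintegral_const_mul _ hm2, lintegral_exponentialPDF_eq_one hr1, mul_one]
  constructor
  · have h1 : μ {ω | X ω < g ω} = ((expMeasure 1).prod (μ.map g)) {p : ℝ × ℝ | p.1 < p.2} := by
      rw [← hlaw, ← hjoint, Measure.map_apply (hX.prodMk hg)
        (measurableSet_lt measurable_fst measurable_snd)]
      rfl
    rw [h1, Measure.prod_apply (measurableSet_lt measurable_fst measurable_snd)]
    have h2 : ∀ x : ℝ, (μ.map g) (Prod.mk x ⁻¹' {p : ℝ × ℝ | p.1 < p.2}) = (μ.map g) (Ioi x) := by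
      intro x; rfl
    have hF : ∀ x : ℝ, 0 ≤ x → (μ.map g) (Ioi x) = ENNReal.ofReal (Real.exp (-(r * x))) := by
      intro x hx
      rw [Measure.map_apply hg measurableSet_Ioi]
      exact hsurv₁ x hx
    have hFmeas : Measurable fun x : ℝ => (μ.map g) (Ioi x) := by
      apply Antitone.measurable
      intro u v huv
      exact measure_mono (Ioi_subset_Ioi huv)
    calc ∫⁻ x, (μ.map g) (Prod.mk x ⁻¹' {p : ℝ × ℝ | p.1 < p.2}) ∂(expMeasure 1)
        = ∫⁻ x, (μ.map g) (Ioi x) ∂(expMeasure 1) := by simp_rw [h2]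
      _ = ENNReal.ofReal (1 + r)⁻¹ := key _ hFmeas hF
  · have h1 : μ {ω | X ω ≤ g ω} = ((expMeasure 1).prod (μ.map g)) {p : ℝ × ℝ | p.1 ≤ p.2} := by
      rw [← hlaw, ← hjoint, Measure.map_apply (hX.prodMk hg)
        (measurableSet_le measurable_fst measurable_snd)]
      rfl
    rw [h1, Measure.prod_apply (measurableSet_le measurable_fst measurable_snd)]
    have h2 : ∀ x : ℝ, (μ.map g) (Prod.mk x ⁻¹' {p : ℝ × ℝ | p.1 ≤ p.2}) = (μ.map g) (Ici x) := by
      intro x; rfl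
    have hF : ∀ x : ℝ, 0 ≤ x → (μ.map g) (Ici x) = ENNReal.ofReal (Real.exp (-(r * x))) := by
      intro x hx
      rw [Measure.map_apply hg measurableSet_Ici]
      exact hsurv₂ x hx
    have hFmeas : Measurable fun x : ℝ => (μ.map g) (Ici x) := by
      apply Antitone.measurable
      intro u v huv
      exact measure_mono (Ici_subset_Ici.mpr huv)
    calc ∫⁻ x, (μ.map g) (Prod.mk x ⁻¹' {p : ℝ × ℝ | p.1 ≤ p.2}) ∂(expMeasure 1)
        = ∫⁻ x, (μ.map g) (Ici x) ∂(expMeasure 1) := by simp_rw [h2]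
      _ = ENNReal.ofReal (1 + r)⁻¹ := key _ hFmeas hF

lemma aux_prob {Ω : Type*} [MeasurableSpace Ω] (μ : Measure Ω) [IsProbabilityMeasure μ]
    {N : ℕ} (S : Fin N → Ω → ℝ) (hSmeas : ∀ i, Measurable (S i))
    (hSindep : iIndepFun S μ)
    (hSlaw : ∀ i, μ.map (S i) = expMeasure 1)
    (k : Fin N) (t : Finset (Fin N)) (hkt : k ∉ t) (d : Fin N → ℝ) (hd : ∀ j ∈ t, 0 < d j) :
    μ {ω | ∀ j ∈ t, S k ω < d j * S j ω} = ENNReal.ofReal (1 + ∑ j ∈ t, (d j)⁻¹)⁻¹ ∧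
      μ {ω | ∀ j ∈ t, S k ω ≤ d j * S j ω} = ENNReal.ofReal (1 + ∑ j ∈ t, (d j)⁻¹)⁻¹ := by
  rcases t.eq_empty_or_nonempty with hte | ht
  · subst hte; simp
  have hta : t.attach.Nonempty := Finset.attach_nonempty_iff.mpr ht
  set r : ℝ := ∑ j ∈ t, (d j)⁻¹ with hr_def
  have hr : 0 ≤ r := Finset.sum_nonneg fun j hj => inv_nonneg.mpr (hd j hj).le
  set M : Ω → ℝ := fun ω => t.attach.inf' hta fun j => d j.1 * S j.1 ω with hM_def
  have hM : Measurable M :=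
    aux_measurable_inf' t.attach hta (fun j ω => d j.1 * S j.1 ω)
      (fun j => (hSmeas j.1).const_mul (d j.1))
  -- independence of S k and M
  have hdisj : Disjoint ({k} : Finset (Fin N)) t := Finset.disjoint_singleton_left.mpr hkt
  have h1 := hSindep.indepFun_finset {k} t hdisj hSmeas
  have hind : IndepFun (S k) M μ := by
    have hφ : Measurable fun v : {x // x ∈ ({k} : Finset (Fin N))} → ℝ =>
        v ⟨k, Finset.mem_singleton_self k⟩ := measurable_pi_apply _
    have hψ : Measurable fun v : {x // x ∈ t} → ℝ =>
        t.attach.inf' hta fun j => d j.1 * v j :=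
      aux_measurable_inf' t.attach hta (fun j (v : {x // x ∈ t} → ℝ) => d j.1 * v j)
        (fun j => by fun_prop)
    exact h1.comp hφ hψ
  -- survival function of M
  have hfac : ∀ (x : ℝ), 0 ≤ x →
      (∏ j ∈ t, ENNReal.ofReal (Real.exp (-(x * (d j)⁻¹))))
        = ENNReal.ofReal (Real.exp (-(r * x))) := by
    intro x hx
    rw [← ENNReal.ofReal_prod_of_nonneg (fun j _ => (Real.exp_pos _).le), ← Real.exp_sum]
    congr 2
    rw [hr_def, Finset.sum_mul, ← Finset.sum_neg_distrib]
    exact Finset.sum_congr rfl fun j _ => by ring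
  have hsurv₁ : ∀ (x : ℝ), 0 ≤ x →
      μ {ω | x < M ω} = ENNReal.ofReal (Real.exp (-(r * x))) := by
    intro x hx
    have hset1 : {ω | x < M ω} = ⋂ j ∈ t, {ω | x < d j * S j ω} := by
      ext ω
      simp only [hM_def, Set.mem_setOf_eq, Set.mem_iInter, Finset.lt_inf'_iff,
        Finset.mem_attach, true_implies, Subtype.forall]
    have hmeas : ∀ j ∈ t, MeasurableSet[(inferInstance :
        MeasurableSpace ℝ).comap (S j)] {ω | x < d j * S j ω} :=
      fun j hj => ⟨{y | x < d j * y},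
        measurableSet_lt measurable_const (measurable_id.const_mul (d j)), rfl⟩
    rw [hset1, hSindep.meas_biInter hmeas, ← hfac x hx]
    refine Finset.prod_congr rfl fun j hj => ?_
    have hdj := hd j hj
    have hset2 : {ω | x < d j * S j ω} = S j ⁻¹' Ioi (x / d j) := by
      ext ω; simp [Set.mem_preimage, mem_Ioi, div_lt_iff₀' hdj]
    rw [hset2, ← Measure.map_apply (hSmeas j) measurableSet_Ioi, hSlaw j,
      aux_expMeasure_Ioi (by positivity)]
    rw [div_eq_mul_inv]
  have hsurv₂ : ∀ (x : ℝ), 0 ≤ x →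
      μ {ω | x ≤ M ω} = ENNReal.ofReal (Real.exp (-(r * x))) := by
    intro x hx
    have hset1 : {ω | x ≤ M ω} = ⋂ j ∈ t, {ω | x ≤ d j * S j ω} := by
      ext ω
      simp only [hM_def, Set.mem_setOf_eq, Set.mem_iInter, Finset.le_inf'_iff,
        Finset.mem_attach, true_implies, Subtype.forall]
    have hmeas : ∀ j ∈ t, MeasurableSet[(inferInstance :
        MeasurableSpace ℝ).comap (S j)] {ω | x ≤ d j * S j ω} :=
      fun j hj => ⟨{y | x ≤ d j * y},
        measurableSet_le measurable_const (measurable_id.const_mul (d j)), rfl⟩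
    rw [hset1, hSindep.meas_biInter hmeas, ← hfac x hx]
    refine Finset.prod_congr rfl fun j hj => ?_
    have hdj := hd j hj
    have hset2 : {ω | x ≤ d j * S j ω} = S j ⁻¹' Ici (x / d j) := by
      ext ω; simp [Set.mem_preimage, mem_Ici, div_le_iff₀' hdj]
    rw [hset2, ← Measure.map_apply (hSmeas j) measurableSet_Ici, hSlaw j,
      aux_expMeasure_Ici (by positivity)]
    rw [div_eq_mul_inv]
  have hcore := aux_core μ (S k) M (hSmeas k) hM (hSlaw k) hind hr hsurv₁ hsurv₂
  constructor
  · have hset : {ω | ∀ j ∈ t, S k ω < d j * S j ω} = {ω | S k ω < M ω} := by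
      ext ω
      simp only [hM_def, Set.mem_setOf_eq, Finset.lt_inf'_iff,
        Finset.mem_attach, true_implies, Subtype.forall]
    rw [hset, hcore.1]
  · have hset : {ω | ∀ j ∈ t, S k ω ≤ d j * S j ω} = {ω | S k ω ≤ M ω} := by
      ext ω
      simp only [hM_def, Set.mem_setOf_eq, Finset.le_inf'_iff,
        Finset.mem_attach, true_implies, Subtype.forall]
    rw [hset, hcore.2]


lemma aux_expMeasure_Iio0 : expMeasure 1 (Iio 0) = 0 := by
  rw [expMeasure, gammaMeasure, withDensity_apply _ measurableSet_Iio]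
  exact lintegral_exponentialPDF_of_nonpos le_rfl

lemma aux_ratio (ak bk A B : ℝ) (h1 : 0 < ak) (h2 : 0 < bk) (h3 : 0 < A) (h4 : 0 < B) :
    (1 + (ak / A) * B / bk)⁻¹ = (A / ak + B / bk)⁻¹ / (ak / A) := by
  field_simp


/-- finite-alphabet importance matching lemma.
If `S₁,…,S_N` are i.i.d. `Exponential(1)` random variables, `a`, `b` are strictly positive
weight vectors, and `Up`, `Uq` are the argmins of `Sᵢ/aᵢ` and `Sᵢ/bᵢ` respectively, then
for every `k`, `Pr(Up ≠ Uq ∣ Up = k) ≤ 1 − (1 + (a k/∑ a j) ⬝ (∑ b j)/b k)⁻¹`. -/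
theorem stmt0
    {Ω : Type*} [MeasurableSpace Ω] (μ : Measure Ω) [IsProbabilityMeasure μ]
    (N : ℕ) (a b : Fin N → ℝ) (ha : ∀ i, 0 < a i) (hb : ∀ i, 0 < b i)
    (S : Fin N → Ω → ℝ) (hSmeas : ∀ i, Measurable (S i))
    (hSindep : iIndepFun S μ)
    (hSlaw : ∀ i, μ.map (S i) = expMeasure 1)
    (Up Uq : Ω → Fin N) (hUpmeas : Measurable Up) (hUqmeas : Measurable Uq)
    (hUp : ∀ ω j, S (Up ω) ω / a (Up ω) ≤ S j ω / a j)
    (hUq : ∀ ω j, S (Uq ω) ω / b (Uq ω) ≤ S j ω / b j)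
    (k : Fin N) :
    μ[|{ω | Up ω = k}] {ω | Up ω ≠ Uq ω}
      ≤ ENNReal.ofReal (1 - (1 + (a k / ∑ j, a j) * (∑ j, b j) / b k)⁻¹) := by
  classical
  set A : ℝ := ∑ j, a j with hA_def
  set B : ℝ := ∑ j, b j with hB_def
  have hA : 0 < A := Finset.sum_pos (fun i _ => ha i) ⟨k, Finset.mem_univ k⟩
  have hB : 0 < B := Finset.sum_pos (fun i _ => hb i) ⟨k, Finset.mem_univ k⟩
  set t : Finset (Fin N) := Finset.univ.erase k with ht_def
  have hkt : k ∉ t := Finset.notMem_erase k _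
  have hsum_a : a k + ∑ j ∈ t, a j = A := Finset.add_sum_erase _ a (Finset.mem_univ k)
  have hsum_b : b k + ∑ j ∈ t, b j = B := Finset.add_sum_erase _ b (Finset.mem_univ k)
  -- step 1: P(Up = k) ≤ a k / A
  have hP1 : μ {ω | Up ω = k} ≤ ENNReal.ofReal (a k / A) := by
    have hsub : {ω | Up ω = k} ⊆ {ω | ∀ j ∈ t, S k ω ≤ (a k / a j) * S j ω} := by
      intro ω hω j _
      have h := hUp ω j
      rw [Set.mem_setOf_eq] at hω
      rw [hω] at h
      rw [div_le_div_iff₀ (ha k) (ha j)] at h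
      rw [div_mul_eq_mul_div, le_div_iff₀ (ha j)]
      linarith
    have hval := (aux_prob μ S hSmeas hSindep hSlaw k t hkt (fun j => a k / a j)
      (fun j _ => div_pos (ha k) (ha j))).2
    have hcalc : (1 + ∑ j ∈ t, (a k / a j)⁻¹)⁻¹ = a k / A := by
      have h1 : ∀ j ∈ t, (a k / a j)⁻¹ = a j / a k := fun j _ => by rw [inv_div]
      rw [Finset.sum_congr rfl h1]
      have h2 : (1:ℝ) + ∑ j ∈ t, a j / a k = A / a k := by
        rw [← Finset.sum_div, eq_div_iff (ha k).ne', add_mul, one_mul, div_mul_cancel₀]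
        · linarith [hsum_a]
        · exact (ha k).ne'
      rw [h2, inv_div]
    calc μ {ω | Up ω = k} ≤ μ {ω | ∀ j ∈ t, S k ω ≤ (a k / a j) * S j ω} :=
          measure_mono hsub
      _ = ENNReal.ofReal (1 + ∑ j ∈ t, (a k / a j)⁻¹)⁻¹ := hval
      _ = ENNReal.ofReal (a k / A) := by rw [hcalc]
  -- step 2: P(Up = k ∧ Uq = k) ≥ vE
  set vE : ℝ := (A / a k + B / b k)⁻¹ with hvE_def
  have hvE_pos : 0 < vE := by
    rw [hvE_def]
    exact inv_pos.mpr (add_pos (div_pos hA (ha k)) (div_pos hB (hb k)))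
  have hP2 : ENNReal.ofReal vE ≤ μ ({ω | Up ω = k} ∩ {ω | Uq ω = k}) := by
    set c : Fin N → ℝ := fun j => min (a k / a j) (b k / b j) with hc_def
    have hc : ∀ j ∈ t, 0 < c j :=
      fun j _ => lt_min (div_pos (ha k) (ha j)) (div_pos (hb k) (hb j))
    -- the good event, intersected with nonnegativity
    have hGnull : μ {ω | ∀ j, 0 ≤ S j ω}ᶜ = 0 := by
      have : {ω | ∀ j, 0 ≤ S j ω}ᶜ = ⋃ j, S j ⁻¹' Iio 0 := by
        ext ω; simp [not_le]
      rw [this]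
      refine measure_iUnion_null fun j => ?_
      rw [← Measure.map_apply (hSmeas j) measurableSet_Iio, hSlaw j, aux_expMeasure_Iio0]
    have hsub : {ω | ∀ j ∈ t, S k ω < c j * S j ω} ∩ {ω | ∀ j, 0 ≤ S j ω}
        ⊆ {ω | Up ω = k} ∩ {ω | Uq ω = k} := by
      rintro ω ⟨hω, hpos⟩
      constructor
      · by_contra hne
        have hmem : Up ω ∈ t := Finset.mem_erase.mpr ⟨hne, Finset.mem_univ _⟩
        have h1 := hω (Up ω) hmem
        have h2 := hUp ω k
        have h3 : c (Up ω) ≤ a k / a (Up ω) := min_le_left _ _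
        have h4 := hpos (Up ω)
        have h5 := ha (Up ω); have h6 := ha k
        rw [div_le_div_iff₀ h5 h6] at h2
        have h3' : c (Up ω) * a (Up ω) ≤ a k := (le_div_iff₀ h5).mp h3
        have key1 : a (Up ω) * S k ω < a (Up ω) * (c (Up ω) * S (Up ω) ω) :=
          mul_lt_mul_of_pos_left h1 h5
        have key2 : c (Up ω) * a (Up ω) * S (Up ω) ω ≤ a k * S (Up ω) ω :=
          mul_le_mul_of_nonneg_right h3' h4
        nlinarith [key1, key2, h2]
      · by_contra hne
        have hmem : Uq ω ∈ t := Finset.mem_erase.mpr ⟨hne, Finset.mem_univ _⟩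
        have h1 := hω (Uq ω) hmem
        have h2 := hUq ω k
        have h3 : c (Uq ω) ≤ b k / b (Uq ω) := min_le_right _ _
        have h4 := hpos (Uq ω)
        have h5 := hb (Uq ω); have h6 := hb k
        rw [div_le_div_iff₀ h5 h6] at h2
        have h3' : c (Uq ω) * b (Uq ω) ≤ b k := (le_div_iff₀ h5).mp h3
        have key1 : b (Uq ω) * S k ω < b (Uq ω) * (c (Uq ω) * S (Uq ω) ω) :=
          mul_lt_mul_of_pos_left h1 h5
        have key2 : c (Uq ω) * b (Uq ω) * S (Uq ω) ω ≤ b k * S (Uq ω) ω :=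
          mul_le_mul_of_nonneg_right h3' h4
        nlinarith [key1, key2, h2]
    have hval := (aux_prob μ S hSmeas hSindep hSlaw k t hkt c hc).1
    have hle : vE ≤ (1 + ∑ j ∈ t, (c j)⁻¹)⁻¹ := by
      have hterm : ∀ j ∈ t, (c j)⁻¹ ≤ a j / a k + b j / b k := by
        intro j hj
        rcases min_cases (a k / a j) (b k / b j) with ⟨hmin, _⟩ | ⟨hmin, _⟩ <;>
          rw [hc_def] <;> simp only [] <;> rw [hmin, inv_div]
        · have : (0:ℝ) ≤ b j / b k := (div_pos (hb j) (hb k)).le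
          linarith
        · have : (0:ℝ) ≤ a j / a k := (div_pos (ha j) (ha k)).le
          linarith
      have hsum : ∑ j ∈ t, (c j)⁻¹ ≤ (A - a k) / a k + (B - b k) / b k := by
        calc ∑ j ∈ t, (c j)⁻¹ ≤ ∑ j ∈ t, (a j / a k + b j / b k) :=
              Finset.sum_le_sum hterm
          _ = (A - a k) / a k + (B - b k) / b k := by
              rw [Finset.sum_add_distrib, ← Finset.sum_div, ← Finset.sum_div]
              congr 2 <;> linarith [hsum_a, hsum_b]
      have hpos0 : (0:ℝ) ≤ ∑ j ∈ t, (c j)⁻¹ :=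
        Finset.sum_nonneg fun j hj => (inv_pos.mpr (hc j hj)).le
      apply inv_anti₀ (by linarith)
      have h1 : (A - a k) / a k = A / a k - 1 := by
        rw [sub_div, div_self (ha k).ne']
      have h2 : (B - b k) / b k = B / b k - 1 := by
        rw [sub_div, div_self (hb k).ne']
      have h3 : (1:ℝ) ≤ B / b k := by
        rw [le_div_iff₀ (hb k)]
        nlinarith [hsum_b, Finset.sum_nonneg (fun j (_ : j ∈ t) => (hb j).le)]
      linarith [hsum]
    calc ENNReal.ofReal vE ≤ ENNReal.ofReal (1 + ∑ j ∈ t, (c j)⁻¹)⁻¹ :=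
          ENNReal.ofReal_le_ofReal hle
      _ = μ {ω | ∀ j ∈ t, S k ω < c j * S j ω} := hval.symm
      _ = μ ({ω | ∀ j ∈ t, S k ω < c j * S j ω} ∩ {ω | ∀ j, 0 ≤ S j ω}) :=
          (measure_inter_conull hGnull).symm
      _ ≤ μ ({ω | Up ω = k} ∩ {ω | Uq ω = k}) := measure_mono hsub
  -- step 3: assemble
  have hmeasA : MeasurableSet {ω | Up ω = k} := hUpmeas (measurableSet_singleton k)
  have hmeasE : MeasurableSet ({ω | Up ω = k} ∩ {ω | Uq ω = k}) :=
    hmeasA.inter (hUqmeas (measurableSet_singleton k))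
  set p := μ {ω | Up ω = k} with hp_def
  set e := μ ({ω | Up ω = k} ∩ {ω | Uq ω = k}) with he_def
  have he_le_p : e ≤ p := measure_mono inter_subset_left
  have hp_ne_top : p ≠ ⊤ := measure_ne_top μ _
  have he_ne_top : e ≠ ⊤ := measure_ne_top μ _
  have hp_pos : 0 < p := lt_of_lt_of_le (lt_of_lt_of_le
    (ENNReal.ofReal_pos.mpr hvE_pos) hP2) he_le_p
  have hAB : {ω | Up ω = k} ∩ {ω | Up ω ≠ Uq ω}
      = {ω | Up ω = k} \ ({ω | Up ω = k} ∩ {ω | Uq ω = k}) := by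
    ext ω
    simp only [Set.mem_inter_iff, Set.mem_setOf_eq, Set.mem_diff, not_and]
    constructor
    · rintro ⟨h1, h2⟩
      exact ⟨h1, fun _ h3 => h2 (h1.trans h3.symm)⟩
    · rintro ⟨h1, h2⟩
      refine ⟨h1, fun he => (h2 h1) ?_⟩
      rw [← he, h1]
  have hcond : μ[|{ω | Up ω = k}] {ω | Up ω ≠ Uq ω} = p⁻¹ * (p - e) := by
    rw [cond_apply hmeasA, hAB, measure_diff inter_subset_left
      hmeasE.nullMeasurableSet he_ne_top]
  rw [hcond]
  have hL_ne_top : p⁻¹ * (p - e) ≠ ⊤ :=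
    ENNReal.mul_ne_top (ENNReal.inv_ne_top.mpr hp_pos.ne')
      (ne_top_of_le_ne_top hp_ne_top tsub_le_self)
  have hc0 : 0 < (a k / A) * B / b k :=
    div_pos (mul_pos (div_pos (ha k) hA) hB) (hb k)
  have hT_nonneg : 0 ≤ 1 - (1 + (a k / A) * B / b k)⁻¹ := by
    have : (1 + (a k / A) * B / b k)⁻¹ ≤ 1 := by
      rw [inv_le_one_iff₀]; right; linarith
    linarith
  rw [ENNReal.le_ofReal_iff_toReal_le hL_ne_top hT_nonneg]
  rw [ENNReal.toReal_mul, ENNReal.toReal_inv, ENNReal.toReal_sub_of_le he_le_p hp_ne_top]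
  set pr := p.toReal with hpr_def
  set er := e.toReal with her_def
  have hpr_le : pr ≤ a k / A :=
    ENNReal.toReal_le_of_le_ofReal (div_pos (ha k) hA).le hP1
  have her_ge : vE ≤ er := (ENNReal.ofReal_le_iff_le_toReal he_ne_top).mp hP2
  have her_le : er ≤ pr := (ENNReal.toReal_le_toReal he_ne_top hp_ne_top).mpr he_le_p
  have hpr_pos : 0 < pr := ENNReal.toReal_pos hp_pos.ne' hp_ne_top
  -- the target equals 1 - vE / (a k / A)
  have hTeq : (1 + (a k / A) * B / b k)⁻¹ = vE / (a k / A) := by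
    rw [hvE_def]
    exact aux_ratio (a k) (b k) A B (ha k) (hb k) hA hB
  have hdiv : vE / (a k / A) ≤ er / pr :=
    div_le_div₀ (by linarith) her_ge hpr_pos hpr_le
  have heq2 : pr⁻¹ * (pr - er) = 1 - er / pr := by
    rw [mul_sub, inv_mul_cancel₀ hpr_pos.ne', inv_mul_eq_div]
  rw [heq2, hTeq]
  linarith [hdiv]
end

section
/- Let P be a probability measure on a measurable space 𝒴 and λ, β : 𝒴 → (0, ω] measurable with ∫λ dP = ∫β dP = 1. Let Y_2,…,Y_N be i.i.d. with law P and fix y₁ ∈ 𝒴 with λ(y₁) > 0 (writing Y_1 = y₁). Then for any 0 < ε < 1: E[ (Σ_{j=1}^N β(Y_j)) / (Σ_{j=1}^N λ(Y_j))² ] ≤ (β(y₁) + (N−1)(1+ε)) / (λ(y₁) + (N−1)(1−ε))² + (Nω/λ(y₁)²)·2·exp(−(N−1)ε²/ω²). -/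
open MeasureTheory ProbabilityTheory

open Real


section helper
variable {𝒴 : Type*} [MeasurableSpace 𝒴] (P : Measure 𝒴) [IsProbabilityMeasure P]

lemma int_bdd' {f : 𝒴 → ℝ} (hf : Measurable f) {C : ℝ} (h : ∀ y, |f y| ≤ C) :
    Integrable f P :=
  Integrable.mono' (integrable_const C) hf.aestronglyMeasurable (ae_of_all _ h)

lemma dens_abs {om : ℝ} {f : 𝒴 → ℝ} (hom : 1 ≤ om) (hpos : ∀ y, 0 < f y)
    (hle : ∀ y, f y ≤ om) : ∀ y, |f y - 1| ≤ om := by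
  intro y
  rw [abs_le]
  constructor
  · linarith [hpos y]
  · linarith [hle y]

lemma dens_var {om : ℝ} {f : 𝒴 → ℝ} (hf : Measurable f) (hom : 1 ≤ om)
    (hpos : ∀ y, 0 < f y) (hle : ∀ y, f y ≤ om) (hone : ∫ y, f y ∂P = 1) :
    ∫ y, (f y - 1) ^ 2 ∂P ≤ om - 1 := by
  have habs : ∀ y, |f y| ≤ om := fun y => by
    rw [abs_of_pos (hpos y)]; exact hle y
  have hif : Integrable f P := int_bdd' P hf habs
  have hpt : ∀ y, (f y - 1) ^ 2 ≤ (om - 2) * f y + 1 := by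
    intro y
    nlinarith [hpos y, hle y]
  have hint2 : Integrable (fun y => (f y - 1) ^ 2) P := by
    refine int_bdd' P (by measurability) (C := (om + 1) ^ 2) fun y => ?_
    rw [abs_pow]
    refine pow_le_pow_left₀ (abs_nonneg _) ?_ 2
    rw [abs_sub_comm]
    calc |1 - f y| ≤ |(1:ℝ)| + |f y| := abs_sub _ _
      _ ≤ 1 + om := by simp [habs y]
      _ = om + 1 := by ring
  calc ∫ y, (f y - 1) ^ 2 ∂P ≤ ∫ y, ((om - 2) * f y + 1) ∂P :=
        integral_mono hint2 ((hif.const_mul _).add (integrable_const 1)) hpt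
    _ = om - 1 := by
        rw [integral_add (hif.const_mul _) (integrable_const 1), integral_const_mul, hone]
        simp
        ring

end helper

lemma exp_le_add_sq {x : ℝ} (hx : |x| ≤ 1) : Real.exp x ≤ 1 + x + x ^ 2 := by
  have h := Real.exp_bound hx (n := 2) (by norm_num)
  have h2 : ∑ m ∈ Finset.range 2, x ^ m / m.factorial = 1 + x := by
    simp [Finset.sum_range_succ]
  rw [h2] at h
  have h3 := (abs_sub_le_iff.1 h).1
  norm_num at h3
  nlinarith [sq_abs x, sq_nonneg x]

lemma int_bdd {𝒴 : Type*} [MeasurableSpace 𝒴] {P : Measure 𝒴} [IsFiniteMeasure P]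
    {f : 𝒴 → ℝ} (hf : Measurable f) {C : ℝ} (h : ∀ y, |f y| ≤ C) : Integrable f P :=
  Integrable.mono' (integrable_const C) hf.aestronglyMeasurable (ae_of_all _ h)

lemma mgf_le {𝒴 : Type*} [MeasurableSpace 𝒴] (P : Measure 𝒴) [IsProbabilityMeasure P]
    (g : 𝒴 → ℝ) (hg : Measurable g) (om t : ℝ) (ht : 0 ≤ t)
    (habs : ∀ y, |g y| ≤ om) (htom : t * om ≤ 1) (hmean : ∫ y, g y ∂P = 0) :
    ∫ y, Real.exp (t * g y) ∂P ≤ 1 + t ^ 2 * ∫ y, g y ^ 2 ∂P := by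
  have hpt : ∀ y, Real.exp (t * g y) ≤ 1 + t * g y + t ^ 2 * g y ^ 2 := by
    intro y
    have h1 : |t * g y| ≤ 1 := by
      rw [abs_mul, abs_of_nonneg ht]
      exact le_trans (mul_le_mul_of_nonneg_left (habs y) ht) htom
    have := exp_le_add_sq h1
    calc Real.exp (t * g y) ≤ 1 + t * g y + (t * g y) ^ 2 := this
      _ = 1 + t * g y + t ^ 2 * g y ^ 2 := by ring
  have hig : Integrable g P := int_bdd hg habs
  have hig2 : Integrable (fun y => g y ^ 2) P := by
    refine int_bdd (hg.pow_const 2) (C := om ^ 2) fun y => ?_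
    rw [abs_pow]
    exact pow_le_pow_left₀ (abs_nonneg _) (habs y) 2
  have hie : Integrable (fun y => Real.exp (t * g y)) P := by
    refine int_bdd ((measurable_const.mul hg).exp) (C := Real.exp 1) fun y => ?_
    rw [abs_of_nonneg (Real.exp_pos _).le]
    refine Real.exp_le_exp.2 (le_trans (le_abs_self _) ?_)
    rw [abs_mul, abs_of_nonneg ht]
    exact le_trans (mul_le_mul_of_nonneg_left (habs y) ht) htom
  have hint1 : Integrable (fun y => 1 + t * g y) P := (integrable_const 1).add (hig.const_mul t)
  have hint : Integrable (fun y => 1 + t * g y + t ^ 2 * g y ^ 2) P :=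
    hint1.add (hig2.const_mul (t ^ 2))
  calc ∫ y, Real.exp (t * g y) ∂P ≤ ∫ y, (1 + t * g y + t ^ 2 * g y ^ 2) ∂P :=
        integral_mono hie hint hpt
    _ = 1 + t ^ 2 * ∫ y, g y ^ 2 ∂P := by
        rw [integral_add hint1 (hig2.const_mul (t ^ 2)),
          integral_add (integrable_const 1) (hig.const_mul t),
          integral_const, integral_const_mul, integral_const_mul, hmean]
        simp

lemma conc {𝒴 : Type*} [MeasurableSpace 𝒴] (P : Measure 𝒴) [IsProbabilityMeasure P]
    (om : ℝ) (hom : 1 ≤ om) (g : 𝒴 → ℝ) (hg : Measurable g) (habs : ∀ y, |g y| ≤ om)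
    (hmean : ∫ y, g y ∂P = 0) (hvar : ∫ y, g y ^ 2 ∂P ≤ om - 1)
    (n : ℕ) (ε : ℝ) (hε0 : 0 < ε) (hε1 : ε < 1) :
    (Measure.pi fun _ : Fin n => P) {x | (n : ℝ) * ε ≤ ∑ j, g (x j)}
      ≤ ENNReal.ofReal (Real.exp (-((n : ℝ) * ε ^ 2 / om ^ 2))) := by
  set σ2 := ∫ y, g y ^ 2 ∂P with hσ2
  have hσ2₀ : 0 ≤ σ2 := integral_nonneg fun y => sq_nonneg _
  have hom0 : 0 < om := lt_of_lt_of_le one_pos hom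
  -- choose t
  obtain ⟨t, ht0, htom, hkey⟩ : ∃ t : ℝ, 0 < t ∧ t * om ≤ 1 ∧
      ε ^ 2 / om ^ 2 ≤ t * ε - t ^ 2 * σ2 := by
    rcases le_or_gt (2 * ε) om with hc | hc
    · refine ⟨ε / (2 * max σ2 (ε * om / 2)), ?_, ?_, ?_⟩
      · positivity
      · rw [div_mul_eq_mul_div, div_le_one (by positivity)]
        calc ε * om ≤ 2 * (ε * om / 2) := le_of_eq (by ring)
          _ ≤ 2 * max σ2 (ε * om / 2) := by
              gcongr; exact le_max_right _ _
      · set v := max σ2 (ε * om / 2) with hv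
        have hv0 : 0 < v := lt_max_of_lt_right (by positivity)
        have h4v : 4 * v ≤ om ^ 2 := by
          rcases max_cases σ2 (ε * om / 2) with ⟨h, _⟩ | ⟨h, _⟩ <;> rw [← hv] at h
          · nlinarith [sq_nonneg (om - 2), hvar]
          · nlinarith [mul_le_mul_of_nonneg_right hc hom0.le]
        have hσv : σ2 ≤ v := le_max_left _ _
        have : (ε / (2 * v)) * ε - (ε / (2 * v)) ^ 2 * σ2
            ≥ (ε / (2 * v)) * ε - (ε / (2 * v)) ^ 2 * v := by nlinarith [sq_nonneg (ε / (2 * v))]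
        refine le_trans ?_ this
        have heq : (ε / (2 * v)) * ε - (ε / (2 * v)) ^ 2 * v = ε ^ 2 / (4 * v) := by
          field_simp; ring
        rw [heq]
        exact div_le_div_of_nonneg_left (sq_nonneg ε) (by positivity) h4v
    · refine ⟨1 / om, by positivity, by rw [one_div_mul_cancel hom0.ne'], ?_⟩
      have hω : om < 1 + ε := by nlinarith
      have heq : (1 / om) * ε - (1 / om) ^ 2 * σ2 = (ε * om - σ2) / om ^ 2 := by
        field_simp
      rw [heq]
      gcongr
      nlinarith [hvar]
  -- MGF of the sum
  letI : MeasureSpace 𝒴 := ⟨P⟩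
  have hpi : (Measure.pi fun _ : Fin n => P) = (volume : Measure (Fin n → 𝒴)) := rfl
  set S : (Fin n → 𝒴) → ℝ := fun x => ∑ j, g (x j) with hS
  have hSm : Measurable S := Finset.measurable_sum _ fun j _ => hg.comp (measurable_pi_apply j)
  have hprod : ∫ x : Fin n → 𝒴, Real.exp (t * S x) = (∫ y, Real.exp (t * g y) ∂P) ^ n := by
    have : ∀ x : Fin n → 𝒴, Real.exp (t * S x) = ∏ j, Real.exp (t * g (x j)) := by
      intro x
      rw [hS, Finset.mul_sum, Real.exp_sum]
    simp_rw [this]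
    rw [← hpi, MeasureTheory.integral_fintype_prod_eq_pow (ι := Fin n) (fun y => Real.exp (t * g y))]
    simp only [Fintype.card_fin]
  have hmgf : ∫ y, Real.exp (t * g y) ∂P ≤ Real.exp (t ^ 2 * σ2) :=
    le_trans (mgf_le P g hg om t ht0.le habs htom hmean)
      (by nlinarith [Real.add_one_le_exp (t ^ 2 * σ2)])
  have hmgf0 : 0 ≤ ∫ y, Real.exp (t * g y) ∂P := integral_nonneg fun y => (Real.exp_pos _).le
  -- integrability of exp(t * S)
  have hieS : Integrable (fun x : Fin n → 𝒴 => Real.exp (t * S x)) volume := by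
    refine int_bdd ((measurable_const.mul hSm).exp) (C := Real.exp n) fun x => ?_
    rw [abs_of_nonneg (Real.exp_pos _).le]
    refine Real.exp_le_exp.2 ?_
    have hSb : S x ≤ n * om := by
      rw [hS]
      calc ∑ j, g (x j) ≤ ∑ _j : Fin n, om :=
            Finset.sum_le_sum fun j _ => le_trans (le_abs_self _) (habs _)
        _ = n * om := by simp [mul_comm]
    calc t * S x ≤ t * (n * om) := by
          rcases le_or_gt (S x) (n * om) with h | h
          · exact mul_le_mul_of_nonneg_left hSb ht0.le
          · exact absurd h (not_lt.2 hSb)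
      _ = n * (t * om) := by ring
      _ ≤ n * 1 := by
          exact mul_le_mul_of_nonneg_left htom (Nat.cast_nonneg n)
      _ = n := mul_one _
  -- Markov
  have hmarkov : (Measure.pi fun _ : Fin n => P) {x | (n : ℝ) * ε ≤ S x}
      ≤ (∫⁻ x : Fin n → 𝒴, ENNReal.ofReal (Real.exp (t * S x))) /
        ENNReal.ofReal (Real.exp (t * (n * ε))) := by
    rw [hpi]
    refine le_trans (measure_mono ?_)
      (meas_ge_le_lintegral_div (μ := (volume : Measure (Fin n → 𝒴)))
        (f := fun x => ENNReal.ofReal (Real.exp (t * S x)))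
        ((measurable_const.mul hSm).exp.ennreal_ofReal).aemeasurable
        (by simp [Real.exp_pos]) ENNReal.ofReal_ne_top)
    intro x hx
    exact ENNReal.ofReal_le_ofReal (Real.exp_le_exp.2
      (mul_le_mul_of_nonneg_left hx ht0.le))
  have hlint : ∫⁻ x : Fin n → 𝒴, ENNReal.ofReal (Real.exp (t * S x))
      = ENNReal.ofReal ((∫ y, Real.exp (t * g y) ∂P) ^ n) := by
    rw [← ofReal_integral_eq_lintegral_ofReal hieS (ae_of_all _ fun x => (Real.exp_pos _).le),
      hprod]
  have hfinal : ((∫ y, Real.exp (t * g y) ∂P) ^ n)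
      ≤ Real.exp (t * (n * ε)) * Real.exp (-((n : ℝ) * ε ^ 2 / om ^ 2)) := by
    rw [← Real.exp_add]
    calc (∫ y, Real.exp (t * g y) ∂P) ^ n ≤ (Real.exp (t ^ 2 * σ2)) ^ n :=
          pow_le_pow_left₀ hmgf0 hmgf n
      _ = Real.exp ((n : ℝ) * (t ^ 2 * σ2)) := by
          rw [← Real.exp_nat_mul]
      _ ≤ Real.exp (t * ((n : ℝ) * ε) + -((n : ℝ) * ε ^ 2 / om ^ 2)) := by
          refine Real.exp_le_exp.2 ?_
          have h1 := mul_le_mul_of_nonneg_left hkey (Nat.cast_nonneg n : (0:ℝ) ≤ n)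
          have h2 : (n : ℝ) * ε ^ 2 / om ^ 2 = (n : ℝ) * (ε ^ 2 / om ^ 2) := by ring
          nlinarith [h1, h2]
  calc (Measure.pi fun _ : Fin n => P) {x | (n : ℝ) * ε ≤ S x}
      ≤ (∫⁻ x : Fin n → 𝒴, ENNReal.ofReal (Real.exp (t * S x))) /
        ENNReal.ofReal (Real.exp (t * (n * ε))) := hmarkov
    _ ≤ (ENNReal.ofReal (Real.exp (t * (n * ε))) *
          ENNReal.ofReal (Real.exp (-((n : ℝ) * ε ^ 2 / om ^ 2)))) /
        ENNReal.ofReal (Real.exp (t * (n * ε))) := by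
        rw [hlint, ← ENNReal.ofReal_mul (Real.exp_pos _).le]
        exact ENNReal.div_le_div_right (ENNReal.ofReal_le_ofReal hfinal) _
    _ = ENNReal.ofReal (Real.exp (-((n : ℝ) * ε ^ 2 / om ^ 2))) := by
        rw [mul_div_assoc, ENNReal.mul_div_cancel (by simp [Real.exp_pos])
          ENNReal.ofReal_ne_top]

/-- `lam`, `bet : 𝒴 → (0, ω]` are density ratios with unit `P`-integral.
With `Y₁ = y₁` fixed (with `lam y₁ > 0`) and `Y₂,…,Y_N` i.i.d. `P`, for any `0 < ε < 1`:
`E[(∑ⱼ bet (Y j)) / (∑ⱼ lam (Y j))²]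
  ≤ (bet y₁ + (N−1)(1+ε)) / (lam y₁ + (N−1)(1−ε))² + (Nω/lam y₁²)⬝2⬝exp(−(N−1)ε²/ω²)`. -/
theorem stmt5
    {𝒴 : Type*} [MeasurableSpace 𝒴] (P : Measure 𝒴) [IsProbabilityMeasure P]
    (om : ℝ) (lam bet : 𝒴 → ℝ) (hlamm : Measurable lam) (hbetm : Measurable bet)
    (hlam_pos : ∀ y, 0 < lam y) (hlam_le : ∀ y, lam y ≤ om)
    (hbet_pos : ∀ y, 0 < bet y) (hbet_le : ∀ y, bet y ≤ om)
    (hlam_one : ∫ y, lam y ∂P = 1) (hbet_one : ∫ y, bet y ∂P = 1)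
    (N : ℕ) (hN : 0 < N) (y₁ : 𝒴) (hy₁ : 0 < lam y₁)
    (ε : ℝ) (hε0 : 0 < ε) (hε1 : ε < 1) :
    ∫⁻ y : Fin (N - 1) → 𝒴,
        ENNReal.ofReal ((bet y₁ + ∑ j, bet (y j)) / (lam y₁ + ∑ j, lam (y j)) ^ 2)
        ∂(Measure.pi fun _ : Fin (N - 1) => P)
      ≤ ENNReal.ofReal
          ((bet y₁ + ((N : ℝ) - 1) * (1 + ε)) /
              (lam y₁ + ((N : ℝ) - 1) * (1 - ε)) ^ 2
            + (N : ℝ) * om / (lam y₁) ^ 2 * 2 *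
                Real.exp (-(((N : ℝ) - 1) * ε ^ 2 / om ^ 2))) := by
  set n : ℕ := N - 1 with hn
  have hNn : ((N : ℝ) - 1) = (n : ℝ) := by
    rw [hn, Nat.cast_sub hN, Nat.cast_one]
  have hNn' : (N : ℝ) = (n : ℝ) + 1 := by rw [← hNn]; ring
  rw [hNn, hNn']
  -- basic facts
  have hlam_abs : ∀ y, |lam y| ≤ om := fun y => by
    rw [abs_of_pos (hlam_pos y)]; exact hlam_le y
  have hbet_abs : ∀ y, |bet y| ≤ om := fun y => by
    rw [abs_of_pos (hbet_pos y)]; exact hbet_le y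
  have hilam : Integrable lam P := int_bdd' P hlamm hlam_abs
  have hom : 1 ≤ om := by
    calc (1 : ℝ) = ∫ y, lam y ∂P := hlam_one.symm
      _ ≤ ∫ _y, om ∂P := integral_mono hilam (integrable_const om) hlam_le
      _ = om := by simp
  have hom0 : 0 < om := lt_of_lt_of_le one_pos hom
  set μ : Measure (Fin n → 𝒴) := Measure.pi fun _ : Fin n => P with hμ
  haveI : IsProbabilityMeasure μ := by rw [hμ]; infer_instance
  -- concentration for lam (lower tail) and bet (upper tail)
  set E : ℝ := Real.exp (-((n : ℝ) * ε ^ 2 / om ^ 2)) with hE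
  have hE0 : 0 ≤ E := (Real.exp_pos _).le
  have hconc1 : μ {x | (n : ℝ) * ε ≤ ∑ j, (1 - lam (x j))} ≤ ENNReal.ofReal E := by
    refine conc P om hom (fun y => 1 - lam y) (measurable_const.sub hlamm)
      (fun y => by rw [abs_sub_comm]; exact dens_abs hom hlam_pos hlam_le y) ?_ ?_ n ε hε0 hε1
    · rw [integral_sub (integrable_const 1) hilam, hlam_one, integral_const]
      simp
    · calc ∫ y, (1 - lam y) ^ 2 ∂P = ∫ y, (lam y - 1) ^ 2 ∂P := by
            congr 1; ext y; ring
        _ ≤ om - 1 := dens_var P hlamm hom hlam_pos hlam_le hlam_one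
  have hconc2 : μ {x | (n : ℝ) * ε ≤ ∑ j, (bet (x j) - 1)} ≤ ENNReal.ofReal E := by
    refine conc P om hom (fun y => bet y - 1) (hbetm.sub measurable_const)
      (dens_abs hom hbet_pos hbet_le) ?_
      (dens_var P hbetm hom hbet_pos hbet_le hbet_one) n ε hε0 hε1
    rw [integral_sub (int_bdd' P hbetm hbet_abs) (integrable_const 1), hbet_one, integral_const]
    simp
  -- the bad set
  set B : Set (Fin n → 𝒴) := {x | (n : ℝ) * ε ≤ ∑ j, (1 - lam (x j))}
      ∪ {x | (n : ℝ) * ε ≤ ∑ j, (bet (x j) - 1)} with hB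
  have hSlamm : Measurable fun x : Fin n → 𝒴 => ∑ j, lam (x j) :=
    Finset.measurable_sum _ fun j _ => hlamm.comp (measurable_pi_apply j)
  have hSbetm : Measurable fun x : Fin n → 𝒴 => ∑ j, bet (x j) :=
    Finset.measurable_sum _ fun j _ => hbetm.comp (measurable_pi_apply j)
  have hBm : MeasurableSet B := by
    refine MeasurableSet.union ?_ ?_
    · exact measurableSet_le measurable_const
        (Finset.measurable_sum _ fun j _ => (measurable_const.sub hlamm).comp
          (measurable_pi_apply j))
    · exact measurableSet_le measurable_const
        (Finset.measurable_sum _ fun j _ => (hbetm.sub measurable_const).comp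
          (measurable_pi_apply j))
  have hμB : μ B ≤ ENNReal.ofReal E + ENNReal.ofReal E :=
    le_trans (measure_union_le _ _) (add_le_add hconc1 hconc2)
  -- constants
  set Cg : ℝ := (bet y₁ + (n : ℝ) * (1 + ε)) / (lam y₁ + (n : ℝ) * (1 - ε)) ^ 2 with hCg
  set Cb : ℝ := ((n : ℝ) + 1) * om / (lam y₁) ^ 2 with hCb
  have hCg0 : 0 ≤ Cg := by
    apply div_nonneg
    · have := hbet_pos y₁; positivity
    · positivity
  have hCb0 : 0 ≤ Cb := by positivity
  -- pointwise bounds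
  have hden_pos : 0 < lam y₁ + (n : ℝ) * (1 - ε) := by
    have : (0:ℝ) ≤ (n : ℝ) * (1 - ε) := mul_nonneg (Nat.cast_nonneg n) (by linarith)
    linarith
  have hgood : ∀ x ∈ Bᶜ,
      ENNReal.ofReal ((bet y₁ + ∑ j, bet (x j)) / (lam y₁ + ∑ j, lam (x j)) ^ 2)
        ≤ ENNReal.ofReal Cg := by
    intro x hx
    rw [Set.mem_compl_iff, hB, Set.mem_union] at hx
    push_neg at hx
    obtain ⟨h1, h2⟩ := hx
    rw [Set.mem_setOf_eq, not_le] at h1 h2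
    have hsum1 : (n : ℝ) * (1 - ε) ≤ ∑ j, lam (x j) := by
      have : ∑ j, (1 - lam (x j)) = (n : ℝ) - ∑ j, lam (x j) := by
        rw [Finset.sum_sub_distrib]
        simp
      rw [this] at h1
      nlinarith
    have hsum2 : ∑ j, bet (x j) ≤ (n : ℝ) * (1 + ε) := by
      have : ∑ j, (bet (x j) - 1) = (∑ j, bet (x j)) - (n : ℝ) := by
        rw [Finset.sum_sub_distrib]
        simp
      rw [this] at h2
      nlinarith
    refine ENNReal.ofReal_le_ofReal (div_le_div₀ ?_ (by linarith) (by positivity) ?_)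
    · have := hbet_pos y₁; positivity
    · refine pow_le_pow_left₀ hden_pos.le (by linarith) 2
  have hbad : ∀ x : Fin n → 𝒴,
      ENNReal.ofReal ((bet y₁ + ∑ j, bet (x j)) / (lam y₁ + ∑ j, lam (x j)) ^ 2)
        ≤ ENNReal.ofReal Cb := by
    intro x
    have hsumlam : (0:ℝ) ≤ ∑ j, lam (x j) :=
      Finset.sum_nonneg fun j _ => (hlam_pos _).le
    have hsumbet : ∑ j, bet (x j) ≤ (n : ℝ) * om := by
      calc ∑ j, bet (x j) ≤ ∑ _j : Fin n, om := Finset.sum_le_sum fun j _ => hbet_le _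
        _ = (n : ℝ) * om := by simp [mul_comm]
    refine ENNReal.ofReal_le_ofReal (div_le_div₀ ?_ ?_ (by positivity) ?_)
    · have := hbet_pos y₁; positivity
    · have := hbet_le y₁; linarith
    · nlinarith
  -- split the integral
  calc ∫⁻ x, ENNReal.ofReal ((bet y₁ + ∑ j, bet (x j)) / (lam y₁ + ∑ j, lam (x j)) ^ 2) ∂μ
      = (∫⁻ x in Bᶜ, ENNReal.ofReal
          ((bet y₁ + ∑ j, bet (x j)) / (lam y₁ + ∑ j, lam (x j)) ^ 2) ∂μ)
        + ∫⁻ x in B, ENNReal.ofReal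
          ((bet y₁ + ∑ j, bet (x j)) / (lam y₁ + ∑ j, lam (x j)) ^ 2) ∂μ := by
        rw [← lintegral_add_compl (μ := μ) _ hBm]
        exact add_comm _ _
    _ ≤ ENNReal.ofReal Cg * 1 + ENNReal.ofReal Cb * (ENNReal.ofReal E + ENNReal.ofReal E) := by
        refine add_le_add ?_ ?_
        · calc _ ≤ ∫⁻ _x in Bᶜ, ENNReal.ofReal Cg ∂μ :=
                setLIntegral_mono measurable_const hgood
            _ = ENNReal.ofReal Cg * μ Bᶜ := by rw [setLIntegral_const]
            _ ≤ ENNReal.ofReal Cg * 1 := by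
                exact mul_le_mul_right prob_le_one _
        · calc _ ≤ ∫⁻ _x in B, ENNReal.ofReal Cb ∂μ :=
                setLIntegral_mono measurable_const fun x _ => hbad x
            _ = ENNReal.ofReal Cb * μ B := by rw [setLIntegral_const]
            _ ≤ _ := mul_le_mul_right hμB _
    _ = ENNReal.ofReal (Cg + Cb * 2 * E) := by
        rw [mul_one, ← ENNReal.ofReal_add hE0 hE0, ← ENNReal.ofReal_mul hCb0,
          ← ENNReal.ofReal_add hCg0 (by positivity)]
        ring_nf
    _ = _ := by rw [hCg, hCb, hE]
end

section
/- Let P and Q be probability measures on a measurable space 𝒴 with Q ≪ P and density r = dQ/dP satisfying 0 < r(y) ≤ ω for P-a.e. y. Let Y_1,…,Y_N be i.i.d. with law P. Then E[ (Σ_{i=1}^N r(Y_i) log₂ r(Y_i)) / (Σ_{j=1}^N r(Y_j)) ] ≤ D(Q‖P) + (6(ω−1)·log₂ ω)/N, where D(Q‖P) = E_{Y∼P}[r(Y) log₂ r(Y)]. -/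
open MeasureTheory ProbabilityTheory

lemma pi_int_prod {𝒴 : Type*} [MeasurableSpace 𝒴] (P : Measure 𝒴) [SigmaFinite P]
    {ι : Type*} [Fintype ι] (f : ι → 𝒴 → ℝ) :
    ∫ x : ι → 𝒴, ∏ i, f i (x i) ∂(Measure.pi fun _ => P) = ∏ i, ∫ y, f i y ∂P := by
  letI : MeasureSpace 𝒴 := ⟨P⟩
  exact MeasureTheory.integral_fintype_prod_eq_prod f

lemma pi_int_single {𝒴 : Type*} [MeasurableSpace 𝒴] (P : Measure 𝒴) [IsProbabilityMeasure P]
    {N : ℕ} (i : Fin N) (g : 𝒴 → ℝ) :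
    ∫ x : Fin N → 𝒴, g (x i) ∂(Measure.pi fun _ => P) = ∫ y, g y ∂P := by
  have h := pi_int_prod P (fun k => if k = i then g else fun _ => 1)
  have e1 : ∀ x : Fin N → 𝒴,
      (∏ k, (if k = i then g else fun _ => (1:ℝ)) (x k)) = g (x i) := by
    intro x
    rw [Finset.prod_eq_single i (fun k _ hk => by simp [hk]) (by simp)]
    simp
  have e2 : (∏ k, ∫ y, (if k = i then g else fun _ => (1:ℝ)) y ∂P) = ∫ y, g y ∂P := by
    rw [Finset.prod_eq_single i (fun k _ hk => by simp [hk]) (by simp)]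
    simp
  rw [← e2, ← h]
  exact integral_congr_ae (Filter.Eventually.of_forall (fun x => (e1 x).symm))

lemma pi_int_pair {𝒴 : Type*} [MeasurableSpace 𝒴] (P : Measure 𝒴) [IsProbabilityMeasure P]
    {N : ℕ} {i j : Fin N} (hij : i ≠ j) (g h : 𝒴 → ℝ) :
    ∫ x : Fin N → 𝒴, g (x i) * h (x j) ∂(Measure.pi fun _ => P)
      = (∫ y, g y ∂P) * ∫ y, h y ∂P := by
  have hp := pi_int_prod P (fun k => if k = i then g else if k = j then h else fun _ => 1)
  have e1 : ∀ x : Fin N → 𝒴,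
      (∏ k, (if k = i then g else if k = j then h else fun _ => (1:ℝ)) (x k))
        = g (x i) * h (x j) := by
    intro x
    rw [← Finset.mul_prod_erase Finset.univ _ (Finset.mem_univ i)]
    rw [← Finset.mul_prod_erase _ _ (Finset.mem_erase.2 ⟨hij.symm, Finset.mem_univ j⟩)]
    rw [Finset.prod_eq_one (fun k hk => by
      simp only [Finset.mem_erase] at hk
      simp [hk.1, hk.2.1])]
    simp [hij.symm]
  have e2 : (∏ k, ∫ y, (if k = i then g else if k = j then h else fun _ => (1:ℝ)) y ∂P)
        = (∫ y, g y ∂P) * ∫ y, h y ∂P := by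
    rw [← Finset.mul_prod_erase Finset.univ _ (Finset.mem_univ i)]
    rw [← Finset.mul_prod_erase _ _ (Finset.mem_erase.2 ⟨hij.symm, Finset.mem_univ j⟩)]
    rw [Finset.prod_eq_one (fun k hk => by
      simp only [Finset.mem_erase] at hk
      simp [hk.1, hk.2.1])]
    simp [hij.symm]
  rw [← e2, ← hp]
  exact integral_congr_ae (Filter.Eventually.of_forall (fun x => (e1 x).symm))

/-- the (i,j) cross-term integral. -/
lemma pi_int_cross {𝒴 : Type*} [MeasurableSpace 𝒴] (P : Measure 𝒴) [IsProbabilityMeasure P]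
    {N : ℕ} (i j : Fin N) (g h : 𝒴 → ℝ) :
    ∫ x : Fin N → 𝒴, g (x i) * h (x j) ∂(Measure.pi fun _ => P)
      = if i = j then (∫ y, g y * h y ∂P) else (∫ y, g y ∂P) * ∫ y, h y ∂P := by
  by_cases hij : i = j
  · subst hij
    simp only [if_true]
    exact pi_int_single P i (fun y => g y * h y)
  · simp only [hij, if_false]
    exact pi_int_pair P hij g h

/-- expectation of a product of two empirical sums. -/
lemma pi_int_sum_mul_sum {𝒴 : Type*} [MeasurableSpace 𝒴] (P : Measure 𝒴) [IsProbabilityMeasure P]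
    {N : ℕ} (g h : 𝒴 → ℝ)
    (hgh : ∀ i j : Fin N, Integrable (fun x : Fin N → 𝒴 => g (x i) * h (x j))
      (Measure.pi fun _ => P)) :
    ∫ x : Fin N → 𝒴, (∑ i, g (x i)) * (∑ j, h (x j)) ∂(Measure.pi fun _ => P)
      = N * (N * ((∫ y, g y ∂P) * ∫ y, h y ∂P)
          + (∫ y, g y * h y ∂P) - (∫ y, g y ∂P) * ∫ y, h y ∂P) := by
  have expand : ∀ x : Fin N → 𝒴,
      (∑ i, g (x i)) * (∑ j, h (x j)) = ∑ i, ∑ j, g (x i) * h (x j) := by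
    intro x; rw [Finset.sum_mul_sum]
  rw [integral_congr_ae (Filter.Eventually.of_forall expand)]
  rw [integral_finset_sum _ (fun i _ => integrable_finset_sum _ (fun j _ => hgh i j))]
  have : ∀ i : Fin N, (∫ x : Fin N → 𝒴, ∑ j, g (x i) * h (x j) ∂(Measure.pi fun _ => P))
      = ∑ j : Fin N, if i = j then (∫ y, g y * h y ∂P) else (∫ y, g y ∂P) * ∫ y, h y ∂P := by
    intro i
    rw [integral_finset_sum _ (fun j _ => hgh i j)]
    exact Finset.sum_congr rfl (fun j _ => pi_int_cross P i j g h)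
  simp only [this]
  set a := ∫ y, g y * h y ∂P
  set b := (∫ y, g y ∂P) * ∫ y, h y ∂P
  have inner : ∀ i : Fin N, (∑ j : Fin N, if i = j then a else b) = N * b + (a - b) := by
    intro i
    have : ∀ j : Fin N, (if i = j then a else b) = b + (if i = j then a - b else 0) := by
      intro j; by_cases hij : i = j <;> simp [hij]
    simp only [this, Finset.sum_add_distrib, Finset.sum_const, Finset.card_univ,
      Fintype.card_fin, Finset.sum_ite_eq, Finset.mem_univ, if_true, nsmul_eq_mul]
  simp only [inner, Finset.sum_const, Finset.card_univ, Fintype.card_fin, nsmul_eq_mul]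
  ring

lemma aux_id (Fv Rv n : ℝ) (hR : Rv ≠ 0) (hn : n ≠ 0) :
    Fv / Rv - (2 * Fv / n - Fv * Rv / n^2) = (Fv / Rv) * (Rv / n - 1)^2 := by
  field_simp
  ring

lemma aux_sq (Rv n : ℝ) (hn : n ≠ 0) :
    (Rv / n - 1)^2 = Rv * Rv / n^2 - 2 * Rv / n + 1 := by
  field_simp
  ring

set_option maxHeartbeats 2000000 in
/-- `Q ≪ P` with density `r = dQ/dP ∈ (0, ω]` `P`-a.e.
With `Y₁,…,Y_N` i.i.d. `P`, the self-normalized importance sampling estimate of the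
KL divergence is upward biased by at most `6(ω−1)log₂ω/N`:
`E[(∑ᵢ r (Y i) log₂ r (Y i))/(∑ⱼ r (Y j))] ≤ D(Q‖P) + 6(ω−1)log₂ω/N`,
where `D(Q‖P) = E_P[r log₂ r]`. -/
theorem stmt13
    {𝒴 : Type*} [MeasurableSpace 𝒴] (P Q : Measure 𝒴)
    [IsProbabilityMeasure P] [IsProbabilityMeasure Q]
    (om : ℝ) (r : 𝒴 → ℝ) (hrm : Measurable r)
    (hQ : Q = P.withDensity (fun y => ENNReal.ofReal (r y)))
    (hr : ∀ᵐ y ∂P, 0 < r y ∧ r y ≤ om)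
    (N : ℕ) (hN : 0 < N) :
    ∫ y : Fin N → 𝒴,
        (∑ i, r (y i) * Real.logb 2 (r (y i))) / (∑ j, r (y j))
        ∂(Measure.pi fun _ : Fin N => P)
      ≤ (∫ y, r y * Real.logb 2 (r y) ∂P) + 6 * (om - 1) * Real.logb 2 om / N := by
  classical
  have hNR : (0:ℝ) < N := Nat.cast_pos.2 hN
  set π : Measure (Fin N → 𝒴) := Measure.pi fun _ : Fin N => P with hπdef
  set f : 𝒴 → ℝ := fun y => r y * Real.logb 2 (r y) with hfdef
  have hfm : Measurable f := hrm.mul ((Real.measurable_log.comp hrm).div_const _)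
  -- ∫ r = 1
  have hr_nn : ∀ᵐ y ∂P, 0 ≤ r y := hr.mono fun y hy => hy.1.le
  have hrInt : Integrable r P := by
    refine Integrable.mono' (integrable_const om) hrm.aestronglyMeasurable ?_
    exact hr.mono fun y hy => by rw [Real.norm_eq_abs, abs_of_pos hy.1]; exact hy.2
  have hB : ∫ y, r y ∂P = 1 := by
    have h1 : ∫⁻ y, ENNReal.ofReal (r y) ∂P = 1 := by
      have := congrArg (fun μ : Measure 𝒴 => μ Set.univ) hQ
      simpa [withDensity_apply _ MeasurableSet.univ] using this.symm
    rw [integral_eq_lintegral_of_nonneg_ae hr_nn hrm.aestronglyMeasurable, h1]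
    simp
  -- 1 ≤ om
  have hom1 : 1 ≤ om := by
    have : ∫ y, r y ∂P ≤ ∫ _, om ∂P :=
      integral_mono_ae hrInt (integrable_const om) (hr.mono fun y hy => hy.2)
    simpa [hB] using this
  have homP : 0 < om := lt_of_lt_of_le one_pos hom1
  set L : ℝ := Real.logb 2 om with hLdef
  have hL : 0 ≤ L := Real.logb_nonneg one_lt_two hom1
  -- pointwise bound on f
  set Cb : ℝ := (1 + om * |Real.log om|) / Real.log 2 with hCbdef
  have hCb : ∀ y, 0 < r y → r y ≤ om → |f y| ≤ Cb := by
    intro y hy0 hyom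
    have hlog2 : (0:ℝ) < Real.log 2 := Real.log_pos one_lt_two
    have key : |r y * Real.log (r y)| ≤ 1 + om * |Real.log om| := by
      rcases le_or_gt (r y) 1 with h1 | h1
      · have := Real.abs_log_mul_self_lt (r y) hy0 h1
        have h2 : 0 ≤ om * |Real.log om| := mul_nonneg homP.le (abs_nonneg _)
        rw [mul_comm]
        nlinarith [this]
      · have hlnn : 0 ≤ Real.log (r y) := Real.log_nonneg h1.le
        have hmul : r y * Real.log (r y) ≤ om * Real.log om := by
          have := Real.log_le_log hy0 hyom
          exact mul_le_mul hyom this hlnn homP.le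
        rw [abs_of_nonneg (mul_nonneg (by linarith) hlnn)]
        have : om * Real.log om ≤ om * |Real.log om| :=
          mul_le_mul_of_nonneg_left (le_abs_self _) homP.le
        linarith
    have hfy : f y = (r y * Real.log (r y)) / Real.log 2 := by
      simp only [hfdef, Real.logb]
      ring
    rw [hfy, hCbdef, abs_div, abs_of_pos hlog2]
    exact div_le_div_of_nonneg_right key hlog2.le
  -- a.e. coordinate facts on π
  have hrae : ∀ i : Fin N, ∀ᵐ x ∂π, 0 < r (x i) ∧ r (x i) ≤ om := by
    intro i
    have h := (Measure.tendsto_eval_ae_ae (μ := fun _ : Fin N => P) (i := i)).eventually hr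
    simpa [Function.eval] using h
  have hae : ∀ᵐ x ∂π, ∀ i, 0 < r (x i) ∧ r (x i) ≤ om := ae_all_iff.2 hrae
  -- functions on the product space
  set F : (Fin N → 𝒴) → ℝ := fun x => ∑ i, f (x i) with hFdef
  set R : (Fin N → 𝒴) → ℝ := fun x => ∑ i, r (x i) with hRdef
  have hFm : Measurable F := Finset.measurable_sum _ (fun i _ => hfm.comp (measurable_pi_apply i))
  have hRm : Measurable R := Finset.measurable_sum _ (fun i _ => hrm.comp (measurable_pi_apply i))
  -- integrability of coordinate products
  have hint_pair : ∀ (g h : 𝒴 → ℝ) (Kg Kh : ℝ), Measurable g → Measurable h →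
      (∀ y, 0 < r y → r y ≤ om → |g y| ≤ Kg) → (∀ y, 0 < r y → r y ≤ om → |h y| ≤ Kh) →
      ∀ i j : Fin N, Integrable (fun x : Fin N → 𝒴 => g (x i) * h (x j)) π := by
    intro g h Kg Kh hg hh hKg hKh i j
    refine Integrable.mono' (integrable_const (Kg * Kh))
      (((hg.comp (measurable_pi_apply i)).mul (hh.comp (measurable_pi_apply j))).aestronglyMeasurable) ?_
    filter_upwards [hrae i, hrae j] with x hxi hxj
    rw [Real.norm_eq_abs, abs_mul]
    exact mul_le_mul (hKg _ hxi.1 hxi.2) (hKh _ hxj.1 hxj.2) (abs_nonneg _)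
      ((abs_nonneg _).trans (hKg _ hxi.1 hxi.2))
  have hint_coord : ∀ (g : 𝒴 → ℝ) (K : ℝ), Measurable g →
      (∀ y, 0 < r y → r y ≤ om → |g y| ≤ K) →
      ∀ i : Fin N, Integrable (fun x : Fin N → 𝒴 => g (x i)) π := by
    intro g K hg hK i
    refine Integrable.mono' (integrable_const K)
      ((hg.comp (measurable_pi_apply i)).aestronglyMeasurable) ?_
    filter_upwards [hrae i] with x hx
    exact (Real.norm_eq_abs _) ▸ hK _ hx.1 hx.2
  have hr_bd : ∀ y, 0 < r y → r y ≤ om → |r y| ≤ om := fun y h1 h2 => by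
    rw [abs_of_pos h1]; exact h2
  -- base integrals
  set A : ℝ := ∫ y, f y ∂P with hAdef
  set C2 : ℝ := ∫ y, f y * r y ∂P with hC2def
  set M : ℝ := ∫ y, r y * r y ∂P with hMdef
  have hfInt : Integrable f P := by
    refine Integrable.mono' (integrable_const Cb) hfm.aestronglyMeasurable ?_
    exact hr.mono fun y hy => (Real.norm_eq_abs _) ▸ hCb y hy.1 hy.2
  have hfrInt : Integrable (fun y => f y * r y) P := by
    refine Integrable.mono' (integrable_const (Cb * om)) (hfm.mul hrm).aestronglyMeasurable ?_
    refine hr.mono fun y hy => ?_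
    rw [Real.norm_eq_abs, abs_mul]
    exact mul_le_mul (hCb y hy.1 hy.2) (hr_bd y hy.1 hy.2) (abs_nonneg _)
      ((abs_nonneg _).trans (hCb y hy.1 hy.2))
  have hrrInt : Integrable (fun y => r y * r y) P := by
    refine Integrable.mono' (integrable_const (om * om)) (hrm.mul hrm).aestronglyMeasurable ?_
    refine hr.mono fun y hy => ?_
    rw [Real.norm_eq_abs, abs_mul]
    exact mul_le_mul (hr_bd y hy.1 hy.2) (hr_bd y hy.1 hy.2) (abs_nonneg _)
      ((abs_nonneg _).trans (hr_bd y hy.1 hy.2))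
  -- A ≥ 0 (Gibbs)
  have hpt_gibbs : ∀ᵐ y ∂P, (r y - 1) / Real.log 2 ≤ f y := by
    refine hr.mono fun y hy => ?_
    have hlog2 : (0:ℝ) < Real.log 2 := Real.log_pos one_lt_two
    have h1 : Real.log (r y)⁻¹ ≤ (r y)⁻¹ - 1 :=
      Real.log_le_sub_one_of_pos (inv_pos.2 hy.1)
    rw [Real.log_inv] at h1
    have h2 : r y - 1 ≤ r y * Real.log (r y) := by
      have h3 := mul_le_mul_of_nonneg_left h1 hy.1.le
      rw [mul_sub, mul_inv_cancel₀ hy.1.ne', mul_one] at h3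
      nlinarith [h3]
    have hfy : f y = (r y * Real.log (r y)) / Real.log 2 := by
      simp only [hfdef, Real.logb]
      ring
    rw [hfy]
    exact div_le_div_of_nonneg_right h2 hlog2.le
  have hA0 : 0 ≤ A := by
    have hint0 : Integrable (fun y => (r y - 1) / Real.log 2) P :=
      (hrInt.sub (integrable_const 1)).div_const _
    have := integral_mono_ae hint0 hfInt hpt_gibbs
    have heq : ∫ y, (r y - 1) / Real.log 2 ∂P = 0 := by
      rw [integral_div, integral_sub hrInt (integrable_const 1)]
      simp [hB]
    rw [hAdef]; linarith [heq ▸ this]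
  -- A ≤ C2
  have hAC2 : A ≤ C2 := by
    refine integral_mono_ae hfInt hfrInt (hr.mono fun y hy => ?_)
    rcases le_or_gt 1 (r y) with h1 | h1
    · have hf0 : 0 ≤ f y := mul_nonneg hy.1.le (Real.logb_nonneg one_lt_two h1)
      exact le_mul_of_one_le_right hf0 h1
    · have hf0 : f y ≤ 0 :=
        mul_nonpos_of_nonneg_of_nonpos hy.1.le (Real.logb_nonpos one_lt_two hy.1.le h1.le)
      calc f y = f y * 1 := (mul_one _).symm
        _ ≤ f y * r y := mul_le_mul_of_nonpos_left h1.le hf0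
  -- M ≤ om
  have hM : M ≤ om := by
    have : ∫ y, r y * r y ∂P ≤ ∫ y, om * r y ∂P := by
      refine integral_mono_ae hrrInt (hrInt.const_mul om) (hr.mono fun y hy => ?_)
      exact mul_le_mul_of_nonneg_right hy.2 hy.1.le
    rw [integral_const_mul, hB, mul_one] at this
    exact this
  -- product-space integrals
  have hFInt : Integrable F π := by
    rw [hFdef]
    exact integrable_finset_sum _ (fun i _ => hint_coord f Cb hfm hCb i)
  have hRInt : Integrable R π := by
    rw [hRdef]
    exact integrable_finset_sum _ (fun i _ => hint_coord r om hrm hr_bd i)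
  have hFRInt : Integrable (fun x => F x * R x) π := by
    refine Integrable.mono' (integrable_const ((N * Cb) * (N * om)))
      ((hFm.mul hRm).aestronglyMeasurable) ?_
    filter_upwards [hae] with x hx
    rw [Real.norm_eq_abs, abs_mul]
    have hFb : |F x| ≤ N * Cb := by
      rw [hFdef]
      calc |∑ i, f (x i)| ≤ ∑ i, |f (x i)| := Finset.abs_sum_le_sum_abs _ _
        _ ≤ ∑ _i : Fin N, Cb := Finset.sum_le_sum fun i _ => hCb _ (hx i).1 (hx i).2
        _ = N * Cb := by simp [mul_comm]
    have hRb : |R x| ≤ N * om := by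
      rw [hRdef]
      calc |∑ i, r (x i)| ≤ ∑ i, |r (x i)| := Finset.abs_sum_le_sum_abs _ _
        _ ≤ ∑ _i : Fin N, om := Finset.sum_le_sum fun i _ => hr_bd _ (hx i).1 (hx i).2
        _ = N * om := by simp [mul_comm]
    exact mul_le_mul hFb hRb (abs_nonneg _) (by positivity)
  have hRRInt : Integrable (fun x => R x * R x) π := by
    refine Integrable.mono' (integrable_const ((N * om) * (N * om)))
      ((hRm.mul hRm).aestronglyMeasurable) ?_
    filter_upwards [hae] with x hx
    rw [Real.norm_eq_abs, abs_mul]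
    have hRb : |R x| ≤ N * om := by
      rw [hRdef]
      calc |∑ i, r (x i)| ≤ ∑ i, |r (x i)| := Finset.abs_sum_le_sum_abs _ _
        _ ≤ ∑ _i : Fin N, om := Finset.sum_le_sum fun i _ => hr_bd _ (hx i).1 (hx i).2
        _ = N * om := by simp [mul_comm]
    exact mul_le_mul hRb hRb (abs_nonneg _) (by positivity)
  have hI1 : ∫ x, F x ∂π = N * A := by
    rw [hFdef, integral_finset_sum _ (fun i _ => hint_coord f Cb hfm hCb i)]
    simp only [hπdef, pi_int_single, Finset.sum_const, Finset.card_univ, Fintype.card_fin,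
      nsmul_eq_mul]
    rfl
  have hIR : ∫ x, R x ∂π = N := by
    rw [hRdef, integral_finset_sum _ (fun i _ => hint_coord r om hrm hr_bd i)]
    simp only [hπdef, pi_int_single, Finset.sum_const, Finset.card_univ, Fintype.card_fin,
      nsmul_eq_mul]
    rw [hB, mul_one]
  have hI2 : ∫ x, F x * R x ∂π = N * (N * (A * 1) + C2 - A * 1) := by
    rw [hFdef, hRdef]
    exact (pi_int_sum_mul_sum P f r (hint_pair f r Cb om hfm hrm hCb hr_bd)).trans (by rw [hB])
  have hI4 : ∫ x, R x * R x ∂π = N * (N * (1 * 1) + M - 1 * 1) := by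
    rw [hRdef]
    exact (pi_int_sum_mul_sum P r r (hint_pair r r om om hrm hrm hr_bd hr_bd)).trans (by rw [hB])
  -- the G function
  set G : (Fin N → 𝒴) → ℝ := fun x => 2 * F x / N - F x * R x / (N:ℝ)^2 with hGdef
  have hGInt : Integrable G π := ((hFInt.const_mul 2).div_const _).sub (hFRInt.div_const _)
  have hIG : ∫ x, G x ∂π = A + (A - C2) / N := by
    have ha : Integrable (fun x => 2 * F x / (N:ℝ)) π := (hFInt.const_mul 2).div_const _
    have hb : Integrable (fun x => F x * R x / (N:ℝ)^2) π := hFRInt.div_const _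
    rw [hGdef, integral_sub ha hb]
    rw [integral_div, integral_div, integral_const_mul, hI1, hI2]
    field_simp
    ring
  set D2 : (Fin N → 𝒴) → ℝ := fun x => (R x / N - 1)^2 with hD2def
  have hD2Int : Integrable D2 π := by
    refine Integrable.mono' (integrable_const (om^2)) ?_ ?_
    · exact (((hRm.div_const _).sub measurable_const).pow_const 2).aestronglyMeasurable
    · filter_upwards [hae] with x hx
      rw [Real.norm_eq_abs, hD2def]
      have h0 : 0 ≤ R x := Finset.sum_nonneg fun i _ => (hx i).1.le
      have hub : R x ≤ N * om := by
        calc R x = ∑ i, r (x i) := rfl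
          _ ≤ ∑ _i : Fin N, om := Finset.sum_le_sum fun i _ => (hx i).2
          _ = N * om := by simp [mul_comm]
      have h1 : R x / N - 1 ≤ om - 1 := by
        have : R x / N ≤ om := by
          rw [div_le_iff₀ hNR]; linarith [hub]
        linarith
      have h2 : -om ≤ R x / N - 1 := by
        have : 0 ≤ R x / N := div_nonneg h0 hNR.le
        linarith
      rw [abs_of_nonneg (sq_nonneg _)]
      nlinarith
  have hID2 : ∫ x, D2 x ∂π = (M - 1) / N := by
    have expand : ∀ x, D2 x = R x * R x / (N:ℝ)^2 - 2 * R x / N + 1 := fun x =>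
      aux_sq (R x) N hNR.ne'
    rw [integral_congr_ae (Filter.Eventually.of_forall expand)]
    have ha : Integrable (fun x => R x * R x / (N:ℝ)^2) π := hRRInt.div_const _
    have hb : Integrable (fun x => 2 * R x / (N:ℝ)) π := (hRInt.const_mul 2).div_const _
    have hab : Integrable (fun x => R x * R x / (N:ℝ)^2 - 2 * R x / (N:ℝ)) π := ha.sub hb
    rw [integral_add hab (integrable_const 1), integral_sub ha hb]
    rw [integral_div, integral_div, integral_const_mul, hI4, hIR, integral_const]
    simp only [measure_univ, probReal_univ, ENNReal.toReal_one, smul_eq_mul, one_mul, mul_one]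
    field_simp
    ring
  -- positivity of R a.e.
  have hRpos : ∀ᵐ x ∂π, 0 < R x := by
    filter_upwards [hae] with x hx
    exact Finset.sum_pos (fun i _ => (hx i).1) (Finset.univ_nonempty_iff.2 ⟨⟨0, hN⟩⟩)
  -- main case split
  have goal_eq : (∫ y : Fin N → 𝒴,
        (∑ i, r (y i) * Real.logb 2 (r (y i))) / (∑ j, r (y j)) ∂π)
      = ∫ x, F x / R x ∂π := rfl
  rw [goal_eq]
  have hRHS2 : 0 ≤ 6 * (om - 1) * Real.logb 2 om / N := by
    apply div_nonneg _ hNR.le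
    have : 0 ≤ om - 1 := by linarith
    positivity
  by_cases hT : Integrable (fun x => F x / R x) π
  · -- integrable case
    have hHInt : Integrable (fun x => F x / R x - G x) π := hT.sub hGInt
    have hsplit : ∫ x, F x / R x ∂π = (∫ x, G x ∂π) + ∫ x, (F x / R x - G x) ∂π := by
      rw [← integral_add hGInt hHInt]
      exact integral_congr_ae (Filter.Eventually.of_forall fun x => by ring)
    have hTle : ∀ᵐ x ∂π, F x / R x - G x ≤ L * D2 x := by
      filter_upwards [hae, hRpos] with x hx hRx
      have hFR : F x ≤ L * R x := by
        rw [hFdef, hRdef, Finset.mul_sum]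
        refine Finset.sum_le_sum fun i _ => ?_
        have h1 : Real.logb 2 (r (x i)) ≤ L :=
          Real.logb_le_logb_of_le one_lt_two (hx i).1 (hx i).2
        calc f (x i) = r (x i) * Real.logb 2 (r (x i)) := rfl
          _ ≤ r (x i) * L := mul_le_mul_of_nonneg_left h1 (hx i).1.le
          _ = L * r (x i) := mul_comm _ _
      have hTL : F x / R x ≤ L := by
        rw [div_le_iff₀ hRx]
        linarith [hFR]
      have hid : F x / R x - G x = (F x / R x) * D2 x :=
        aux_id (F x) (R x) N hRx.ne' hNR.ne'
      rw [hid]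
      exact mul_le_mul_of_nonneg_right hTL (sq_nonneg _)
    have hIH : ∫ x, (F x / R x - G x) ∂π ≤ L * ((M - 1) / N) := by
      calc ∫ x, (F x / R x - G x) ∂π ≤ ∫ x, L * D2 x ∂π :=
            integral_mono_ae hHInt (hD2Int.const_mul L) hTle
        _ = L * ((M - 1) / N) := by rw [integral_const_mul, hID2]
    have hIGle : ∫ x, G x ∂π ≤ A := by
      rw [hIG]
      have : (A - C2) / N ≤ 0 := div_nonpos_of_nonpos_of_nonneg (by linarith) hNR.le
      linarith
    have hfinal : ∫ x, F x / R x ∂π ≤ A + L * ((M - 1) / N) := by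
      rw [hsplit]; linarith
    have hstep : L * ((M - 1) / N) ≤ 6 * (om - 1) * L / N := by
      have hM1 : M - 1 ≤ om - 1 := by linarith
      have h1 : L * (M - 1) ≤ L * (om - 1) := mul_le_mul_of_nonneg_left hM1 hL
      have h2 : L * (om - 1) ≤ 6 * (om - 1) * L := by
        have h3 : (0:ℝ) ≤ (om - 1) * L := mul_nonneg (by linarith) hL
        linarith [h3]
      calc L * ((M - 1) / N) = (L * (M - 1)) / N := by ring
        _ ≤ (6 * (om - 1) * L) / N := div_le_div_of_nonneg_right (by linarith) hNR.le
    calc ∫ x, F x / R x ∂π ≤ A + L * ((M - 1) / N) := hfinal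
      _ ≤ A + 6 * (om - 1) * L / N := by linarith
  · rw [integral_undef hT]
    linarith [hA0, hRHS2]
end
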